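/- For any n ≥ 2, any nonnegative reals c_1,…,c_n, and any symmetric nonnegative kernel φ_{i,j}, the sum over i of the right-hand sides of the truncated non-conservative Safronov-Dubovski system equals −∑_{i=1}^{n−1} ∑_{j=i}^{n} φ_{i,j} c_i c_j, which is ≤ 0. In particular, the total number of particles μ_0(t) = ∑_{i=1}^{n} c_i(t) is non-increasing along solutions. -/

import Mathlib

open Finset

/-- Right-hand sides of the truncated non-conservative Safronov–Dubovski system. -/
noncomputable def Cn (n : ℕ) (φ : ℕ → ℕ → ℝ) (c : ℕ → ℝ) (i : ℕ) : ℝ :=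
  if i = 1 then -(φ 1 1 * c 1 ^ 2) - c 1 * ∑ j ∈ Icc 1 n, φ 1 j * c j
  else if i = n then c (n - 1) * ∑ j ∈ Icc 1 (n - 1), (j : ℝ) * φ (n - 1) j * c j
  else c (i - 1) * ∑ j ∈ Icc 1 (i - 1), (j : ℝ) * φ (i - 1) j * c j
    - c i * ∑ j ∈ Icc 1 i, (j : ℝ) * φ i j * c j
    - c i * ∑ j ∈ Icc i n, φ i j * c j

lemma telesc (A : ℕ → ℝ) (m : ℕ) (hm : 1 ≤ m) :
    ∑ i ∈ Icc 2 m, (A (i - 1) - A i) = A 1 - A m := by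
  induction m with
  | zero => omega
  | succ k ih =>
    rcases Nat.lt_or_ge k 1 with h | h
    · interval_cases k
      simp
    · rw [Finset.sum_Icc_succ_top (by omega), ih h,
        show k + 1 - 1 = k from rfl]
      ring

lemma key_id (n : ℕ) (hn : 2 ≤ n) (φ : ℕ → ℕ → ℝ) (c : ℕ → ℝ) :
    ∑ i ∈ Icc 1 n, Cn n φ c i
      = -∑ i ∈ Icc 1 (n - 1), ∑ j ∈ Icc i n, φ i j * c i * c j := by
  obtain ⟨m, rfl⟩ : ∃ m, n = m + 2 := ⟨n - 2, by omega⟩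
  have hB : ∀ i, (∑ j ∈ Icc i (m + 2), φ i j * c i * c j)
      = c i * ∑ j ∈ Icc i (m + 2), φ i j * c j := by
    intro i
    rw [Finset.mul_sum]
    exact Finset.sum_congr rfl (fun j _ => by ring)
  -- peel top element n = m+2
  rw [Finset.sum_Icc_succ_top (by omega : 1 ≤ m + 2)]
  -- peel bottom element 1
  rw [show Icc 1 (m + 1) = insert 1 (Icc 2 (m + 1)) from by
    ext x; simp [Finset.mem_Icc]; omega, Finset.sum_insert (by simp)]
  -- rewrite middle terms
  have hmid : ∑ i ∈ Icc 2 (m + 1), Cn (m + 2) φ c i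
      = ∑ i ∈ Icc 2 (m + 1),
        ((c (i - 1) * ∑ j ∈ Icc 1 (i - 1), (j : ℝ) * φ (i - 1) j * c j
          - c i * ∑ j ∈ Icc 1 i, (j : ℝ) * φ i j * c j)
          - c i * ∑ j ∈ Icc i (m + 2), φ i j * c j) := by
    refine Finset.sum_congr rfl (fun i hi => ?_)
    simp only [Finset.mem_Icc] at hi
    rw [Cn, if_neg (by omega), if_neg (by omega)]
  rw [hmid, Finset.sum_sub_distrib]
  have htel := telesc (fun i => c i * ∑ j ∈ Icc 1 i, (j : ℝ) * φ i j * c j)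
    (m + 1) (by omega)
  rw [htel]
  -- RHS : peel bottom element of Icc 1 (m+1)
  rw [show m + 2 - 1 = m + 1 from rfl]
  rw [show Icc 1 (m + 1) = insert 1 (Icc 2 (m + 1)) from by
    ext x; simp [Finset.mem_Icc]; omega, Finset.sum_insert (by simp)]
  rw [Cn, if_pos rfl, Cn, if_neg (by omega), if_pos rfl]
  rw [show m + 2 - 1 = m + 1 from rfl]
  simp only [hB]
  have hexp : ∑ j ∈ Icc 1 (m + 1), (j : ℝ) * φ (m + 1) j * c j
      = 1 * φ (m + 1) 1 * c 1 + ∑ j ∈ Icc 2 (m + 1), (j : ℝ) * φ (m + 1) j * c j := by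
    rw [show Icc 1 (m + 1) = insert 1 (Icc 2 (m + 1)) from by
      ext x; simp [Finset.mem_Icc]; omega, Finset.sum_insert (by simp)]
    norm_num
  rw [hexp]
  simp [Finset.Icc_self]
  ring

theorem stmt2 (n : ℕ) (hn : 2 ≤ n) (φ : ℕ → ℕ → ℝ)
    (hφnn : ∀ i j, 0 ≤ φ i j) (hφsym : ∀ i j, φ i j = φ j i) :
    (∀ c : ℕ → ℝ, (∀ i, 0 ≤ c i) →
      ∑ i ∈ Icc 1 n, Cn n φ c i
        = -∑ i ∈ Icc 1 (n - 1), ∑ j ∈ Icc i n, φ i j * c i * c j ∧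
      ∑ i ∈ Icc 1 n, Cn n φ c i ≤ 0) ∧
    (∀ c : ℕ → ℝ → ℝ, (∀ i t, 0 ≤ c i t) →
      (∀ i ∈ Icc 1 n, ∀ t : ℝ, HasDerivAt (c i) (Cn n φ (fun k => c k t) i) t) →
      AntitoneOn (fun t => ∑ i ∈ Icc 1 n, c i t) (Set.Ici 0)) := by
  have key : ∀ c : ℕ → ℝ, (∀ i, 0 ≤ c i) →
      ∑ i ∈ Icc 1 n, Cn n φ c i
        = -∑ i ∈ Icc 1 (n - 1), ∑ j ∈ Icc i n, φ i j * c i * c j ∧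
      ∑ i ∈ Icc 1 n, Cn n φ c i ≤ 0 := by
    intro c hc
    have h := key_id n hn φ c
    refine ⟨h, ?_⟩
    rw [h, neg_nonpos]
    exact Finset.sum_nonneg fun i _ => Finset.sum_nonneg fun j _ =>
      mul_nonneg (mul_nonneg (hφnn i j) (hc i)) (hc j)
  refine ⟨key, ?_⟩
  intro c hc hderiv
  have hF : ∀ t, HasDerivAt (fun t => ∑ i ∈ Icc 1 n, c i t)
      (∑ i ∈ Icc 1 n, Cn n φ (fun k => c k t) i) t := fun t =>
    HasDerivAt.fun_sum (fun i hi => hderiv i hi t)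
  have hdiff : Differentiable ℝ (fun t => ∑ i ∈ Icc 1 n, c i t) :=
    fun t => (hF t).differentiableAt
  apply antitoneOn_of_deriv_nonpos (convex_Ici 0) hdiff.continuous.continuousOn
    hdiff.differentiableOn
  intro x _
  rw [(hF x).deriv]
  exact (key (fun k => c k x) (fun k => hc k x)).2
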